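/- arXiv:1507.05316 — 2 statements merged into one kernel-verified Lean document; each statement's English description precedes it below -/
import Mathlib

section
/- Let n ≥ 1. The set C_n of coincident Boolean functions with n variables is an 𝔽₂-linear subspace of the space of all Boolean functions with n variables (it contains 0 and is closed under pointwise addition), and its cardinality is 2^{2^{n−1}}; equivalently, it has dimension 2^{n−1} over 𝔽₂. -/
/-- Möbius transform of a Boolean function with n variables:
`μₙ(f)(u) = ⊕_{v ≼ u} f(v)` where `≼` is componentwise. -/
def mobius {n : ℕ} (f : (Fin n → ZMod 2) → ZMod 2) : (Fin n → ZMod 2) → ZMod 2 :=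
  fun u => ∑ v ∈ Finset.univ.filter (fun v : Fin n → ZMod 2 => ∀ i, (v i).val ≤ (u i).val), f v

lemma zmod2_cases : ∀ b : ZMod 2, b = 0 ∨ b = 1 := by decide

lemma mobius_zero' {n : ℕ} : mobius (0 : (Fin n → ZMod 2) → ZMod 2) = 0 := by
  funext u; simp [mobius]

lemma mobius_add {n : ℕ} (f g : (Fin n → ZMod 2) → ZMod 2) :
    mobius (f + g) = mobius f + mobius g := by
  funext u; simp [mobius, Finset.sum_add_distrib]

lemma mobius_snoc (m : ℕ) (F : (Fin (m + 1) → ZMod 2) → ZMod 2)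
    (u : Fin m → ZMod 2) (b : ZMod 2) :
    mobius F (Fin.snoc u b) =
      ∑ c ∈ Finset.univ.filter (fun c : ZMod 2 => c.val ≤ b.val),
        mobius (fun w => F (Fin.snoc w c)) u := by
  simp only [mobius]
  rw [← Finset.sum_product']
  refine Finset.sum_nbij' (fun v => (v (Fin.last m), Fin.init v))
    (fun p => Fin.snoc p.2 p.1) ?_ ?_ ?_ ?_ ?_
  · intro v hv
    simp only [Finset.mem_filter, Finset.mem_univ, true_and] at hv ⊢
    rw [Finset.mem_product]
    refine ⟨?_, ?_⟩ <;> simp only [Finset.mem_filter, Finset.mem_univ, true_and]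
    · have := hv (Fin.last m); simpa using this
    · intro i; have := hv (Fin.castSucc i); simpa [Fin.init] using this
  · intro p hp
    rw [Finset.mem_product] at hp
    simp only [Finset.mem_filter, Finset.mem_univ, true_and] at hp ⊢
    intro i
    induction i using Fin.lastCases with
    | last => simpa using hp.1
    | cast i => simpa using hp.2 i
  · intro v _; exact Fin.snoc_init_self v
  · intro p _; simp
  · intro v _; rw [Fin.snoc_init_self]

lemma filter_le_zero :
    Finset.univ.filter (fun c : ZMod 2 => c.val ≤ (0 : ZMod 2).val) = {0} := by decide

lemma filter_le_one :
    Finset.univ.filter (fun c : ZMod 2 => c.val ≤ (1 : ZMod 2).val) = {0, 1} := by decide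

lemma mobius_snoc_zero (m : ℕ) (F : (Fin (m + 1) → ZMod 2) → ZMod 2) (u : Fin m → ZMod 2) :
    mobius F (Fin.snoc u 0) = mobius (fun w => F (Fin.snoc w 0)) u := by
  rw [mobius_snoc, filter_le_zero, Finset.sum_singleton]

lemma mobius_snoc_one (m : ℕ) (F : (Fin (m + 1) → ZMod 2) → ZMod 2) (u : Fin m → ZMod 2) :
    mobius F (Fin.snoc u 1) =
      mobius (fun w => F (Fin.snoc w 0)) u + mobius (fun w => F (Fin.snoc w 1)) u := by
  rw [mobius_snoc, filter_le_one]
  rw [Finset.sum_insert (by decide), Finset.sum_singleton]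

lemma mobius_mobius : ∀ {n : ℕ} (f : (Fin n → ZMod 2) → ZMod 2), mobius (mobius f) = f := by
  intro n
  induction n with
  | zero =>
    have h0 : ∀ f : (Fin 0 → ZMod 2) → ZMod 2, mobius f = f := by
      intro f; funext u
      rw [mobius, Finset.filter_true_of_mem (fun v _ i => isEmptyElim i),
        Finset.univ_unique, Finset.sum_singleton]
      exact congrArg f (Subsingleton.elim _ _)
    intro f; rw [h0, h0]
  | succ m ih =>
    intro F
    funext v
    induction v using Fin.snocCases with
    | snoc u b =>
      have hF0 : (fun w => mobius F (Fin.snoc w 0)) = mobius (fun w => F (Fin.snoc w 0)) :=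
        funext fun w => mobius_snoc_zero m F w
      have hF1 : (fun w => mobius F (Fin.snoc w 1)) =
          mobius (fun w => F (Fin.snoc w 0)) + mobius (fun w => F (Fin.snoc w 1)) :=
        funext fun w => mobius_snoc_one m F w
      rcases zmod2_cases b with rfl | rfl
      · rw [mobius_snoc_zero, hF0, ih]
      · rw [mobius_snoc_one, hF0, hF1, mobius_add, ih, ih]
        simp only [Pi.add_apply]
        rw [← add_assoc, CharTwo.add_self_eq_zero, zero_add]
lemma coincident_iff (m : ℕ) (F : (Fin (m + 1) → ZMod 2) → ZMod 2) :
    mobius F = F ↔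
      (fun u => F (Fin.snoc u 0)) =
        (fun u => F (Fin.snoc u 1)) + mobius (fun u => F (Fin.snoc u 1)) := by
  constructor
  · intro h
    funext u
    have h0 : mobius (fun w => F (Fin.snoc w 0)) u = F (Fin.snoc u 0) := by
      rw [← mobius_snoc_zero, h]
    have h1 : mobius (fun w => F (Fin.snoc w 0)) u + mobius (fun w => F (Fin.snoc w 1)) u
        = F (Fin.snoc u 1) := by rw [← mobius_snoc_one, h]
    rw [h0] at h1
    simp only [Pi.add_apply]
    rw [← h1, add_assoc, CharTwo.add_self_eq_zero, add_zero]
  · intro h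
    funext v
    induction v using Fin.snocCases with
    | snoc u b =>
      have hpt := congrFun h u
      simp only [Pi.add_apply] at hpt
      have key0 : mobius (fun w => F (Fin.snoc w 0)) u = F (Fin.snoc u 0) := by
        rw [show (fun w => F (Fin.snoc w 0)) =
            (fun u => F (Fin.snoc u 1)) + mobius (fun u => F (Fin.snoc u 1)) from h,
          mobius_add, mobius_mobius]
        simp only [Pi.add_apply]
        rw [hpt, add_comm]
      rcases zmod2_cases b with rfl | rfl
      · rw [mobius_snoc_zero]; exact key0
      · rw [mobius_snoc_one, key0, hpt, add_assoc, CharTwo.add_self_eq_zero, add_zero]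

lemma card_coincident (m : ℕ) :
    (Finset.univ.filter
      (fun F : (Fin (m + 1) → ZMod 2) → ZMod 2 => mobius F = F)).card = 2 ^ (2 ^ m) := by
  have hcard : (2 : ℕ) ^ (2 ^ m) = (Finset.univ : Finset ((Fin m → ZMod 2) → ZMod 2)).card := by
    rw [Finset.card_univ]; simp [Fintype.card_fun]
  rw [hcard]
  apply Finset.card_bij (fun F _ => fun u => F (Fin.snoc u 1))
  · intro F _; exact Finset.mem_univ _
  · intro F hF F' hF' h
    rw [Finset.mem_filter] at hF hF'
    have cF := (coincident_iff m F).mp hF.2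
    have cF' := (coincident_iff m F').mp hF'.2
    funext v
    induction v using Fin.snocCases with
    | snoc u b =>
      rcases zmod2_cases b with rfl | rfl
      · have e := congrFun cF u
        have e' := congrFun cF' u
        simp only [Pi.add_apply] at e e'
        have e1 : F (Fin.snoc u 1) = F' (Fin.snoc u 1) := congrFun h u
        rw [e, e', e1, h]
      · exact congrFun h u
  · intro g _
    set Fc : (Fin (m + 1) → ZMod 2) → ZMod 2 :=
      fun v => (if v (Fin.last m) = 0 then g + mobius g else g) (Fin.init v) with hFc
    have h1 : (fun u : Fin m → ZMod 2 => Fc (Fin.snoc u 1)) = g := by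
      funext w
      simp only [hFc, Fin.snoc_last, if_neg (by decide : ¬ (1 : ZMod 2) = 0)]
      rw [Fin.init_snoc]
    have h0 : (fun u : Fin m → ZMod 2 => Fc (Fin.snoc u 0)) = g + mobius g := by
      funext w
      simp only [hFc, Fin.snoc_last, if_pos rfl]
      rw [Fin.init_snoc]
      simp
    refine ⟨Fc, ?_, ?_⟩
    · rw [Finset.mem_filter]
      exact ⟨Finset.mem_univ _, (coincident_iff m Fc).mpr (by rw [h0, h1])⟩
    · exact h1

theorem stmt12 (n : ℕ) (hn : 1 ≤ n) :
    mobius (0 : (Fin n → ZMod 2) → ZMod 2) = 0 ∧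
    (∀ f g : (Fin n → ZMod 2) → ZMod 2,
      mobius f = f → mobius g = g → mobius (f + g) = f + g) ∧
    (Finset.univ.filter
      (fun f : (Fin n → ZMod 2) → ZMod 2 => mobius f = f)).card
      = 2 ^ (2 ^ (n - 1)) := by
  obtain ⟨m, rfl⟩ : ∃ m, n = m + 1 := ⟨n - 1, (Nat.succ_pred_eq_of_pos hn).symm⟩
  refine ⟨mobius_zero', fun f g hf hg => by rw [mobius_add, hf, hg], ?_⟩
  simpa using card_coincident m
end

section
/- Let n ≥ 1 and let f be a Boolean function with n variables with Reed–Muller decomposition f(y,b) = f⁰(y) ⊕ b·f¹(y), where f⁰, f¹ are Boolean functions with n−1 variables. Let φₘ(g) = g ⊕ μₘ(g). Then for all y ∈ 𝔽₂ⁿ⁻¹ and b ∈ 𝔽₂, φₙ(f)(y,b) = φₙ₋₁(f⁰)(y) ⊕ b·(φₙ₋₁(f⁰)(y) ⊕ φₙ₋₁(f¹)(y) ⊕ f⁰(y)). -/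
/-- Möbius transform on 𝔽₂^m × 𝔽₂, identified with 𝔽₂^(m+1) with the
componentwise partial order. -/
def mobiusP {m : ℕ} (F : ((Fin m → ZMod 2) × ZMod 2) → ZMod 2) :
    ((Fin m → ZMod 2) × ZMod 2) → ZMod 2 :=
  fun p => ∑ q ∈ Finset.univ.filter
    (fun q : (Fin m → ZMod 2) × ZMod 2 =>
      (∀ i, (q.1 i).val ≤ (p.1 i).val) ∧ (q.2).val ≤ (p.2).val), F q

lemma mobiusP_eq {m : ℕ} (F : ((Fin m → ZMod 2) × ZMod 2) → ZMod 2)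
    (y : Fin m → ZMod 2) (b : ZMod 2) :
    mobiusP F (y, b) =
      ∑ v ∈ Finset.univ.filter (fun v : Fin m → ZMod 2 => ∀ i, (v i).val ≤ (y i).val),
        ∑ c ∈ Finset.univ.filter (fun c : ZMod 2 => c.val ≤ b.val), F (v, c) := by
  rw [mobiusP, ← Finset.sum_product']
  apply Finset.sum_congr
  · ext q
    simp [Finset.mem_filter, Finset.mem_product]
  · intros; rfl

lemma filter_zero : (Finset.univ.filter (fun c : ZMod 2 => c.val ≤ (0 : ZMod 2).val))
    = {0} := by decide

lemma filter_one : (Finset.univ.filter (fun c : ZMod 2 => c.val ≤ (1 : ZMod 2).val))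
    = {0, 1} := by decide

theorem stmt13 (n : ℕ) (hn : 1 ≤ n)
    (f : ((Fin (n - 1) → ZMod 2) × ZMod 2) → ZMod 2)
    (f0 f1 : (Fin (n - 1) → ZMod 2) → ZMod 2)
    (hRM : ∀ y b, f (y, b) = f0 y + b * f1 y) :
    ∀ (y : Fin (n - 1) → ZMod 2) (b : ZMod 2),
      f (y, b) + mobiusP f (y, b) =
        (f0 y + mobius f0 y) +
          b * ((f0 y + mobius f0 y) + (f1 y + mobius f1 y) + f0 y) := by
  intro y b
  have hb : b = 0 ∨ b = 1 := by revert b; decide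
  rcases hb with rfl | rfl
  · rw [mobiusP_eq, hRM]
    simp only [filter_zero, Finset.sum_singleton, hRM]
    rw [mobius]
    ring
  · rw [mobiusP_eq, hRM]
    have : ∀ v : Fin (n-1) → ZMod 2,
        (∑ c ∈ Finset.univ.filter (fun c : ZMod 2 => c.val ≤ (1 : ZMod 2).val), f (v, c))
          = f1 v := by
      intro v
      rw [filter_one]
      rw [Finset.sum_insert (by decide), Finset.sum_singleton, hRM, hRM]
      ring_nf
      rw [show ((2:ZMod 2) = 0) from rfl]
      ring
    simp only [this]
    rw [mobius, mobius]
    ring_nf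
    rw [show ((3:ZMod 2) = 1) from rfl, show ((2:ZMod 2) = 0) from rfl]
    ring
end
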